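/- For $(x,y)\in\mathbb{R}^2\times\mathbb{R}^2$, define $N(x,y)=\big[(x_1^4+y_1^4)^2+(x_1^4+y_2^4)^2+(x_2^4+y_1^4)^2+(x_2^4+y_2^4)^2\big]^{1/8}$. Then $N$ is a norm on $\mathbb{R}^4$: it is nonnegative, vanishes only at $0$, is absolutely homogeneous of degree $1$, and satisfies the triangle inequality. -/

import Mathlib

open Real
open scoped ENNReal

private lemma rpow_abs_even (a : ℝ) (n : ℕ) (hn : Even n) : ‖a‖ ^ ((n:ℕ):ℝ) = a ^ n := by
  rw [Real.rpow_natCast, Real.norm_eq_abs, pow_abs, abs_of_nonneg (hn.pow_nonneg a)]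

private lemma abs_pow4 (a : ℝ) : |a| ^ 4 = a ^ 4 := by
  rw [pow_abs, abs_of_nonneg (by positivity)]

private lemma abs_pow8 (a : ℝ) : |a| ^ 8 = a ^ 8 := by
  rw [pow_abs, abs_of_nonneg (by positivity)]

private lemma abs_rpow4 (a : ℝ) : |a| ^ (4:ℝ) = a ^ (4:ℕ) := by
  rw [show (4:ℝ) = ((4:ℕ):ℝ) by norm_num, Real.rpow_natCast, pow_abs,
    abs_of_nonneg (by positivity)]

private lemma abs_rpow8 (a : ℝ) : |a| ^ (8:ℝ) = a ^ (8:ℕ) := by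
  rw [show (8:ℝ) = ((8:ℕ):ℝ) by norm_num, Real.rpow_natCast, pow_abs,
    abs_of_nonneg (by positivity)]

private noncomputable def q4 (a b : ℝ) : ℝ := (a ^ 4 + b ^ 4) ^ ((1:ℝ)/4)

private lemma q4_nonneg (a b : ℝ) : 0 ≤ q4 a b := Real.rpow_nonneg (by positivity) _

private lemma q4_pow8 (a b : ℝ) : q4 a b ^ 8 = (a ^ 4 + b ^ 4) ^ 2 := by
  have h : (0:ℝ) ≤ a ^ 4 + b ^ 4 := by positivity
  rw [q4, ← Real.rpow_natCast ((a ^ 4 + b ^ 4) ^ ((1:ℝ)/4)) 8, ← Real.rpow_mul h]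
  norm_num

private lemma q4_tri (a b c d : ℝ) : q4 (a+c) (b+d) ≤ q4 a b + q4 c d := by
  haveI : Fact ((1:ℝ≥0∞) ≤ 4) := ⟨by norm_num⟩
  let f : PiLp 4 (fun _ : Fin 2 => ℝ) := WithLp.toLp 4 ![a, b]
  let g : PiLp 4 (fun _ : Fin 2 => ℝ) := WithLp.toLp 4 ![c, d]
  have h := norm_add_le f g
  have hp : 0 < (4:ℝ≥0∞).toReal := by norm_num
  rw [PiLp.norm_eq_sum hp, PiLp.norm_eq_sum hp, PiLp.norm_eq_sum hp] at h
  simpa [f, g, Fin.sum_univ_two, q4, rpow_abs_even _ 4 (by decide), abs_pow4, abs_rpow4,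
    show (4:ℝ≥0∞).toReal = ((4:ℕ):ℝ) by norm_num] using h

private noncomputable def E8 (a b c d : ℝ) : ℝ := (a^8 + b^8 + c^8 + d^8) ^ ((1:ℝ)/8)

private lemma E8_mono {a b c d a' b' c' d' : ℝ} (ha : |a| ≤ a') (hb : |b| ≤ b')
    (hc : |c| ≤ c') (hd : |d| ≤ d') : E8 a b c d ≤ E8 a' b' c' d' := by
  have key : ∀ x y : ℝ, |x| ≤ y → x ^ 8 ≤ y ^ 8 := by
    intro x y h
    calc x ^ 8 = |x| ^ 8 := by rw [pow_abs, abs_of_nonneg (by positivity)]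
    _ ≤ y ^ 8 := pow_le_pow_left₀ (abs_nonneg x) h 8
  exact Real.rpow_le_rpow (by positivity)
    (add_le_add (add_le_add (add_le_add (key _ _ ha) (key _ _ hb)) (key _ _ hc)) (key _ _ hd))
    (by norm_num)

private lemma E8_tri (a b c d a' b' c' d' : ℝ) :
    E8 (a+a') (b+b') (c+c') (d+d') ≤ E8 a b c d + E8 a' b' c' d' := by
  haveI : Fact ((1:ℝ≥0∞) ≤ 8) := ⟨by norm_num⟩
  let f : PiLp 8 (fun _ : Fin 4 => ℝ) := WithLp.toLp 8 ![a, b, c, d]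
  let g : PiLp 8 (fun _ : Fin 4 => ℝ) := WithLp.toLp 8 ![a', b', c', d']
  have h := norm_add_le f g
  have hp : 0 < (8:ℝ≥0∞).toReal := by norm_num
  rw [PiLp.norm_eq_sum hp, PiLp.norm_eq_sum hp, PiLp.norm_eq_sum hp] at h
  simpa [f, g, Fin.sum_univ_four, E8, rpow_abs_even _ 8 (by decide), abs_pow8, abs_rpow8,
    show (8:ℝ≥0∞).toReal = ((8:ℕ):ℝ) by norm_num, add_assoc] using h

private lemma sq4_zero {x y : ℝ} (h : (x ^ 4 + y ^ 4) ^ 2 = 0) : x = 0 ∧ y = 0 := by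
  have h0 : x ^ 4 + y ^ 4 = 0 := by
    have := sq_eq_zero_iff.mp h
    exact this
  have hx : x ^ 4 = 0 := by nlinarith [pow_nonneg (abs_nonneg x) 4, sq_nonneg (x^2), sq_nonneg (y^2)]
  have hy : y ^ 4 = 0 := by nlinarith [sq_nonneg (x^2), sq_nonneg (y^2)]
  exact ⟨pow_eq_zero_iff (by norm_num : 4 ≠ 0) |>.mp hx,
    pow_eq_zero_iff (by norm_num : 4 ≠ 0) |>.mp hy⟩

/-- The function
`N(x,y) = [(x₁⁴+y₁⁴)² + (x₁⁴+y₂⁴)² + (x₂⁴+y₁⁴)² + (x₂⁴+y₂⁴)²]^{1/8}`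
is a norm on `ℝ⁴ = (ℝ×ℝ)×(ℝ×ℝ)`: nonnegative, vanishing only at `0`, absolutely
homogeneous, and satisfying the triangle inequality. -/
theorem example_N_is_norm
    (N : (ℝ × ℝ) × (ℝ × ℝ) → ℝ)
    (hN : ∀ v : (ℝ × ℝ) × (ℝ × ℝ), N v =
      ((v.1.1 ^ 4 + v.2.1 ^ 4) ^ 2 + (v.1.1 ^ 4 + v.2.2 ^ 4) ^ 2 +
        (v.1.2 ^ 4 + v.2.1 ^ 4) ^ 2 + (v.1.2 ^ 4 + v.2.2 ^ 4) ^ 2) ^ ((1 : ℝ) / 8)) :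
    (∀ v, 0 ≤ N v) ∧
    (∀ v, N v = 0 ↔ v = 0) ∧
    (∀ (a : ℝ) (v), N (a • v) = |a| * N v) ∧
    (∀ v w, N (v + w) ≤ N v + N w) := by
  have hNE : ∀ v : (ℝ × ℝ) × (ℝ × ℝ),
      N v = E8 (q4 v.1.1 v.2.1) (q4 v.1.1 v.2.2) (q4 v.1.2 v.2.1) (q4 v.1.2 v.2.2) := by
    intro v
    rw [hN, E8, q4_pow8, q4_pow8, q4_pow8, q4_pow8]
  refine ⟨fun v => ?_, fun v => ?_, fun a v => ?_, fun v w => ?_⟩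
  · rw [hN]; positivity
  · rw [hN]
    obtain ⟨⟨x1, x2⟩, y1, y2⟩ := v
    simp only [Prod.mk.injEq, Prod.ext_iff]
    constructor
    · intro h
      have hs : (x1 ^ 4 + y1 ^ 4) ^ 2 + (x1 ^ 4 + y2 ^ 4) ^ 2 +
          (x2 ^ 4 + y1 ^ 4) ^ 2 + (x2 ^ 4 + y2 ^ 4) ^ 2 = 0 := by
        by_contra hne
        have hpos : 0 < (x1 ^ 4 + y1 ^ 4) ^ 2 + (x1 ^ 4 + y2 ^ 4) ^ 2 +
            (x2 ^ 4 + y1 ^ 4) ^ 2 + (x2 ^ 4 + y2 ^ 4) ^ 2 :=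
          lt_of_le_of_ne (by positivity) (Ne.symm hne)
        exact absurd h (ne_of_gt (Real.rpow_pos_of_pos hpos _))
      have n1 := sq_nonneg (x1 ^ 4 + y1 ^ 4)
      have n2 := sq_nonneg (x1 ^ 4 + y2 ^ 4)
      have n3 := sq_nonneg (x2 ^ 4 + y1 ^ 4)
      have n4 := sq_nonneg (x2 ^ 4 + y2 ^ 4)
      have e1 := sq4_zero (x := x1) (y := y1) (by linarith)
      have e4 := sq4_zero (x := x2) (y := y2) (by linarith)
      exact ⟨⟨e1.1, e4.1⟩, e1.2, e4.2⟩
    · rintro ⟨⟨h1, h2⟩, h3, h4⟩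
      subst h1; subst h2; subst h3; subst h4
      norm_num
  · rw [hN, hN]
    have h1 : ((a • v).1.1 ^ 4 + (a • v).2.1 ^ 4) ^ 2 + ((a • v).1.1 ^ 4 + (a • v).2.2 ^ 4) ^ 2 +
        ((a • v).1.2 ^ 4 + (a • v).2.1 ^ 4) ^ 2 + ((a • v).1.2 ^ 4 + (a • v).2.2 ^ 4) ^ 2 =
        (a ^ 8) * ((v.1.1 ^ 4 + v.2.1 ^ 4) ^ 2 + (v.1.1 ^ 4 + v.2.2 ^ 4) ^ 2 +
        (v.1.2 ^ 4 + v.2.1 ^ 4) ^ 2 + (v.1.2 ^ 4 + v.2.2 ^ 4) ^ 2) := by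
      simp only [Prod.smul_fst, Prod.smul_snd, smul_eq_mul]
      ring
    rw [h1, Real.mul_rpow (by positivity) (by positivity)]
    congr 1
    rw [show a ^ 8 = |a| ^ 8 by rw [pow_abs, abs_of_nonneg (by positivity)],
      ← Real.rpow_natCast |a| 8, ← Real.rpow_mul (abs_nonneg a)]
    norm_num
  · rw [hNE, hNE, hNE]
    calc E8 (q4 (v+w).1.1 (v+w).2.1) (q4 (v+w).1.1 (v+w).2.2)
          (q4 (v+w).1.2 (v+w).2.1) (q4 (v+w).1.2 (v+w).2.2)
        ≤ E8 (q4 v.1.1 v.2.1 + q4 w.1.1 w.2.1) (q4 v.1.1 v.2.2 + q4 w.1.1 w.2.2)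
          (q4 v.1.2 v.2.1 + q4 w.1.2 w.2.1) (q4 v.1.2 v.2.2 + q4 w.1.2 w.2.2) := by
          apply E8_mono <;>
          · rw [abs_of_nonneg (q4_nonneg _ _)]
            simp only [Prod.fst_add, Prod.snd_add]
            exact q4_tri _ _ _ _
      _ ≤ _ := E8_tri _ _ _ _ _ _ _ _
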